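/- Let η, r be real numbers with 0 < η < 1 and 0 < r ≤ −(1/2)·ln η. Then for every real θ with e^{iθ} ≠ −1, |H_Gᵖ(θ)| < |H_G(θ)|, where H_Gᵖ(θ) = √(1/η − e^{2r})·√(1 − η)/(e^{2r} + e^{iθ}) and H_G(θ) = (1/√η − √η)/(1 + e^{iθ}). -/

import Mathlib

/-- A phase-sensitive in-loop amplifier contributes strictly less phase-quadrature
noise at every frequency: `|H_Gᵖ(θ)| < |H_G(θ)|` for every loop phase `θ` with
`e^{iθ} ≠ −1`. -/
theorem stmt_19 (η r : ℝ) (hη0 : 0 < η) (hη1 : η < 1)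
    (hr0 : 0 < r) (hr : r ≤ -(1 / 2) * Real.log η) :
    ∀ θ : ℝ, Complex.exp (θ * Complex.I) ≠ -1 →
      ‖(((Real.sqrt (1 / η - Real.exp (2 * r)) : ℝ) : ℂ)
            * ((Real.sqrt (1 - η) : ℝ) : ℂ))
          / (((Real.exp (2 * r) : ℝ) : ℂ) + Complex.exp (θ * Complex.I))‖
      < ‖(((1 / Real.sqrt η - Real.sqrt η : ℝ)) : ℂ)
          / (1 + Complex.exp (θ * Complex.I))‖ := by
  intro θ hθ
  set s := Real.exp (2 * r) with hs
  have hs1 : 1 < s := by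
    rw [hs, show (1:ℝ) = Real.exp 0 from Real.exp_zero.symm]
    exact Real.exp_lt_exp.mpr (by linarith)
  have hs2 : s ≤ 1 / η := by
    have h2r : 2 * r ≤ Real.log (1 / η) := by
      rw [one_div, Real.log_inv]; linarith
    calc s ≤ Real.exp (Real.log (1 / η)) := Real.exp_le_exp.mpr h2r
      _ = 1 / η := Real.exp_log (by positivity)
  have h1s : 0 ≤ 1 / η - s := by linarith
  have h1η : 0 < 1 - η := by linarith
  have hsqη : 0 < Real.sqrt η := Real.sqrt_pos.mpr hη0
  have hsqη1 : Real.sqrt η < 1 := by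
    rw [show (1:ℝ) = Real.sqrt 1 from Real.sqrt_one.symm]
    exact Real.sqrt_lt_sqrt hη0.le hη1
  have hApos : 0 < 1 / Real.sqrt η - Real.sqrt η := by
    have : 1 < 1 / Real.sqrt η := (lt_div_iff₀ hsqη).mpr (by linarith)
    linarith
  have hsqsq : Real.sqrt η ^ 2 = η := Real.sq_sqrt hη0.le
  -- numerator inequality
  have hnum : Real.sqrt (1 / η - s) * Real.sqrt (1 - η)
      < 1 / Real.sqrt η - Real.sqrt η := by
    rw [← Real.sqrt_mul h1s, ← Real.sqrt_sq hApos.le]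
    apply Real.sqrt_lt_sqrt (by positivity)
    have hA2 : (1 / Real.sqrt η - Real.sqrt η) ^ 2 = 1 / η - 2 + η := by
      field_simp
      rw [hsqsq]; ring
    rw [hA2]
    have key : (1 / η) * η = 1 := by field_simp
    nlinarith [key, mul_pos (sub_pos.mpr hs1) h1η]
  -- denominator inequality
  have hz : ‖(1 + Complex.exp (θ * Complex.I))‖
      ≤ ‖((s : ℂ) + Complex.exp (θ * Complex.I))‖ := by
    rw [Complex.norm_def, Complex.norm_def]
    apply Real.sqrt_le_sqrt
    simp only [Complex.normSq_apply, Complex.add_re, Complex.add_im,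
      Complex.one_re, Complex.one_im, Complex.ofReal_re, Complex.ofReal_im,
      Complex.exp_ofReal_mul_I_re, Complex.exp_ofReal_mul_I_im]
    nlinarith [Real.neg_one_le_cos θ, Real.sin_sq_add_cos_sq θ]
  have hD2 : 0 < ‖(1 + Complex.exp (θ * Complex.I))‖ := by
    rw [norm_pos_iff]
    intro h
    apply hθ
    linear_combination h
  rw [norm_div, norm_div, norm_mul, Complex.norm_real, Complex.norm_real,
    Complex.norm_real, Real.norm_eq_abs, Real.norm_eq_abs, Real.norm_eq_abs, abs_of_nonneg (Real.sqrt_nonneg _),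
    abs_of_nonneg (Real.sqrt_nonneg _), abs_of_nonneg hApos.le]
  exact div_lt_div₀ hnum hz (by positivity) hD2
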